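/- Let $\Delta_1, \Delta_2$ be positive self-adjoint operators on Hilbert spaces $H_1, H_2$ and $T : H_1 \to H_2$ a contraction with $T^*\Delta_2 T \le \Delta_1$. Then for every $0 \le r \le 1$, $T^* \Delta_2^r T \le \Delta_1^r$. -/

import Mathlib

open scoped InnerProductSpace


open scoped InnerProductSpace
open Set MeasureTheory
open scoped ENNReal

namespace LoewnerHeinzAux

local notation "reC" => RCLike.re (K := ℂ)

lemma re_inner_real_smul {K : Type*} [NormedAddCommGroup K] [InnerProductSpace ℂ K]
    (c : ℝ) (u v : K) : reC ⟪c • u, v⟫_ℂ = c * reC ⟪u, v⟫_ℂ := by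
  rw [RCLike.real_smul_eq_coe_smul (K := ℂ), inner_smul_left, RCLike.conj_ofReal,
    RCLike.re_ofReal_mul]

section OneSpace

variable {K : Type*} [NormedAddCommGroup K] [InnerProductSpace ℂ K] [CompleteSpace K]

/-- key one-space facts about `x ↦ x/(x+lam)`. -/
lemma onespace (A : K →L[ℂ] K) (hA : A.IsPositive) (lam : ℝ) (hlam : 0 < lam) :
    ∃ E : K →L[ℂ] K,
      (∀ ζ η : K, lam * reC ⟪cfc (fun x : ℝ => x / (x + lam)) A ζ, ζ⟫_ℂ ≤
        reC ⟪A η, η⟫_ℂ + lam * ‖ζ - η‖ ^ 2) ∧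
      (∀ ζ : K, lam * reC ⟪cfc (fun x : ℝ => x / (x + lam)) A ζ, ζ⟫_ℂ =
        reC ⟪A (E ζ), E ζ⟫_ℂ + lam * ‖ζ - E ζ‖ ^ 2) := by
  have hsa : IsSelfAdjoint A := hA.isSelfAdjoint
  have hσ : spectrum ℝ A ⊆ Set.Ici 0 := by
    have h0 : 0 ≤ A := A.nonneg_iff_isPositive.mpr hA
    exact fun x hx => spectrum_nonneg_of_nonneg h0 hx
  have hden : ∀ x ∈ spectrum ℝ A, x + lam ≠ 0 := fun x hx => by
    have : (0:ℝ) ≤ x := hσ hx; positivity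
  have hconte : ContinuousOn (fun x : ℝ => lam / (x + lam)) (spectrum ℝ A) :=
    continuousOn_const.div (continuousOn_id.add continuousOn_const) hden
  have hcontg : ContinuousOn (fun x : ℝ => x / (x + lam)) (spectrum ℝ A) :=
    continuousOn_id.div (continuousOn_id.add continuousOn_const) hden
  have hcontq : ContinuousOn (fun x : ℝ => x * (lam / (x + lam))) (spectrum ℝ A) :=
    continuousOn_id.mul hconte
  set E : K →L[ℂ] K := cfc (fun x : ℝ => lam / (x + lam)) A with hE
  set P : K →L[ℂ] K := cfc (fun x : ℝ => x / (x + lam)) A with hP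
  set Q : K →L[ℂ] K := cfc (fun x : ℝ => x * (lam / (x + lam))) A with hQdef
  have hmul : cfc (fun x : ℝ => x * (lam / (x + lam))) A
      = cfc (fun x : ℝ => x) A * cfc (fun x : ℝ => lam / (x + lam)) A :=
    cfc_mul _ _ A continuousOn_id hconte
  have hAE : Q = A * E := by
    rw [hQdef, hE, hmul, cfc_id' ℝ A]
  have hEP : E + P = 1 := by
    rw [hE, hP, ← cfc_add A _ _ hconte hcontg]
    rw [← cfc_one (R := ℝ) A hsa]
    apply cfc_congr
    intro x hx
    field_simp [hden x hx]
    simp only [Pi.one_apply]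
    ring
  have hQ : Q = lam • P := by
    rw [hP, ← cfc_smul lam _ A hcontg]
    apply cfc_congr
    intro x hx
    simp only [smul_eq_mul]
    ring
  have hsym : ∀ u v : K, ⟪A u, v⟫_ℂ = ⟪u, A v⟫_ℂ :=
    (ContinuousLinearMap.isSelfAdjoint_iff_isSymmetric.mp hsa : A.toLinearMap.IsSymmetric)
  have ident : ∀ ζ δ : K, reC ⟪A (δ + E ζ), δ + E ζ⟫_ℂ
      + lam * reC ⟪ζ - (δ + E ζ), ζ - (δ + E ζ)⟫_ℂ
      = reC ⟪Q ζ, ζ⟫_ℂ + reC ⟪A δ, δ⟫_ℂ + lam * reC ⟪δ, δ⟫_ℂ := by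
    intro ζ δ
    have hu : A (E ζ) = Q ζ := by rw [hAE]; rfl
    have hζ : E ζ + P ζ = ζ := by
      have := congrArg (fun (S : K →L[ℂ] K) => S ζ) hEP
      simpa using this
    have hrw : ζ - (δ + E ζ) = P ζ - δ := by nth_rewrite 1 [← hζ]; abel
    have h1 : reC ⟪A δ, E ζ⟫_ℂ = reC ⟪Q ζ, δ⟫_ℂ := by
      rw [hsym δ (E ζ), hu, inner_re_symm]
    have h3 : reC ⟪Q ζ, δ⟫_ℂ = lam * reC ⟪P ζ, δ⟫_ℂ := by
      rw [hQ, ContinuousLinearMap.smul_apply, re_inner_real_smul]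
    have h2 : reC ⟪Q ζ, P ζ⟫_ℂ = lam * reC ⟪P ζ, P ζ⟫_ℂ := by
      rw [hQ, ContinuousLinearMap.smul_apply, re_inner_real_smul]
    have h4 : reC ⟪δ, P ζ⟫_ℂ = reC ⟪P ζ, δ⟫_ℂ := inner_re_symm _ _
    have h5 : reC ⟪Q ζ, E ζ⟫_ℂ = reC ⟪Q ζ, ζ⟫_ℂ - reC ⟪Q ζ, P ζ⟫_ℂ := by
      have hEζ : E ζ = ζ - P ζ := by nth_rewrite 2 [← hζ]; abel
      rw [hEζ, inner_sub_right, map_sub]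
    rw [hrw, map_add A, hu]
    simp only [inner_add_left, inner_add_right, inner_sub_left, inner_sub_right, map_add, map_sub]
    rw [h5, h1, h3, h2, h4]
    ring
  refine ⟨E, ?_, ?_⟩
  · intro ζ η
    have hid := ident ζ (η - E ζ)
    rw [sub_add_cancel] at hid
    have hpos : 0 ≤ reC ⟪A (η - E ζ), η - E ζ⟫_ℂ := hA.re_inner_nonneg_left _
    have hn : reC ⟪η - E ζ, η - E ζ⟫_ℂ = ‖η - E ζ‖ ^ 2 := inner_self_eq_norm_sq _
    have hn2 : reC ⟪ζ - η, ζ - η⟫_ℂ = ‖ζ - η‖ ^ 2 := inner_self_eq_norm_sq _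
    have hQζ : reC ⟪Q ζ, ζ⟫_ℂ = lam * reC ⟪P ζ, ζ⟫_ℂ := by
      rw [hQ, ContinuousLinearMap.smul_apply, re_inner_real_smul]
    rw [hn, hn2, hQζ] at hid
    have hd2 : (0:ℝ) ≤ ‖η - E ζ‖ ^ 2 := sq_nonneg _
    nlinarith
  · intro ζ
    have hid := ident ζ 0
    simp only [zero_add, map_zero, inner_zero_left, inner_zero_right, map_zero, mul_zero,
      add_zero] at hid
    have hn2 : reC ⟪ζ - E ζ, ζ - E ζ⟫_ℂ = ‖ζ - E ζ‖ ^ 2 := inner_self_eq_norm_sq _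
    have hQζ : reC ⟪Q ζ, ζ⟫_ℂ = lam * reC ⟪P ζ, ζ⟫_ℂ := by
      rw [hQ, ContinuousLinearMap.smul_apply, re_inner_real_smul]
    rw [hn2, hQζ] at hid
    linarith

end OneSpace

section Base

variable {H₁ H₂ : Type*} [NormedAddCommGroup H₁] [InnerProductSpace ℂ H₁] [CompleteSpace H₁]
    [NormedAddCommGroup H₂] [InnerProductSpace ℂ H₂] [CompleteSpace H₂]

/-- the basic one-parameter inequality. -/
lemma base_ineq (Δ₁ : H₁ →L[ℂ] H₁) (Δ₂ : H₂ →L[ℂ] H₂)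
    (hΔ₁ : Δ₁.IsPositive) (hΔ₂ : Δ₂.IsPositive)
    (T : H₁ →L[ℂ] H₂) (hT : ‖T‖ ≤ 1)
    (h : ∀ ξ : H₁, reC ⟪Δ₂ (T ξ), T ξ⟫_ℂ ≤ reC ⟪Δ₁ ξ, ξ⟫_ℂ)
    (lam : ℝ) (hlam : 0 < lam) (ξ : H₁) :
    reC ⟪cfc (fun x : ℝ => x / (x + lam)) Δ₂ (T ξ), T ξ⟫_ℂ ≤
      reC ⟪cfc (fun x : ℝ => x / (x + lam)) Δ₁ ξ, ξ⟫_ℂ := by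
  obtain ⟨E₁, -, ident₁⟩ := onespace Δ₁ hΔ₁ lam hlam
  obtain ⟨E₂, claim₂, -⟩ := onespace Δ₂ hΔ₂ lam hlam
  have step1 := claim₂ (T ξ) (T (E₁ ξ))
  have hTn : ‖T ξ - T (E₁ ξ)‖ ≤ ‖ξ - E₁ ξ‖ := by
    rw [← map_sub]
    calc ‖T (ξ - E₁ ξ)‖ ≤ ‖T‖ * ‖ξ - E₁ ξ‖ := T.le_opNorm _
      _ ≤ 1 * ‖ξ - E₁ ξ‖ := by
          apply mul_le_mul_of_nonneg_right hT (norm_nonneg _)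
      _ = ‖ξ - E₁ ξ‖ := one_mul _
  have hTn2 : ‖T ξ - T (E₁ ξ)‖ ^ 2 ≤ ‖ξ - E₁ ξ‖ ^ 2 :=
    pow_le_pow_left₀ (norm_nonneg _) hTn 2
  have step2 := h (E₁ ξ)
  have step3 := ident₁ ξ
  refine (mul_le_mul_iff_right₀ hlam).mp ?_
  calc lam * reC ⟪cfc (fun x : ℝ => x / (x + lam)) Δ₂ (T ξ), T ξ⟫_ℂ
      ≤ reC ⟪Δ₂ (T (E₁ ξ)), T (E₁ ξ)⟫_ℂ + lam * ‖T ξ - T (E₁ ξ)‖ ^ 2 := step1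
    _ ≤ reC ⟪Δ₁ (E₁ ξ), E₁ ξ⟫_ℂ + lam * ‖ξ - E₁ ξ‖ ^ 2 := by
        have := mul_le_mul_of_nonneg_left hTn2 hlam.le
        linarith
    _ = lam * reC ⟪cfc (fun x : ℝ => x / (x + lam)) Δ₁ ξ, ξ⟫_ℂ := step3.symm

end Base

noncomputable def wfun (r t : ℝ) : ℝ := t ^ (r - 1) * (1 / (1 + t))

lemma integrableOn_wfun {r : ℝ} (hr0 : 0 < r) (hr1 : r < 1) :
    IntegrableOn (wfun r) (Ioi (0:ℝ)) := by
  have hsplit : Ioc (0:ℝ) 1 ∪ Ioi 1 = Ioi 0 := Ioc_union_Ioi_eq_Ioi zero_le_one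
  have hcont : ∀ t ∈ Ioi (0:ℝ), ContinuousWithinAt (wfun r) (Ioi 0) t := by
    intro t ht
    have h1 : (0:ℝ) < t := ht
    have : ContinuousWithinAt (fun t : ℝ => t ^ (r-1)) (Ioi 0) t :=
      ((Real.continuousAt_rpow_const t (r-1) (Or.inl h1.ne')).continuousWithinAt)
    exact this.mul ((continuousWithinAt_const.div
      (continuousWithinAt_const.add continuousWithinAt_id) (by positivity)))
  have hmeas : AEStronglyMeasurable (wfun r) (volume.restrict (Ioi (0:ℝ))) :=
    (ContinuousOn.aestronglyMeasurable (fun t ht => hcont t ht) measurableSet_Ioi)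
  rw [← hsplit]
  apply IntegrableOn.union
  · have base : IntegrableOn (fun t : ℝ => t ^ (r-1)) (Ioc 0 1) := by
      have h := intervalIntegral.intervalIntegrable_rpow' (a := 0) (b := 1)
        (r := r - 1) (by linarith)
      rwa [intervalIntegrable_iff_integrableOn_Ioc_of_le zero_le_one] at h
    refine base.mono' (hmeas.mono_set Ioc_subset_Ioi_self) ?_
    filter_upwards [ae_restrict_mem measurableSet_Ioc] with t ht
    have h1 : (0:ℝ) < t := ht.1
    have h2 : (0:ℝ) < 1 + t := by linarith
    simp only [wfun]
    rw [Real.norm_eq_abs, abs_of_nonneg (by positivity)]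
    calc t ^ (r-1) * (1/(1+t)) ≤ t ^ (r-1) * 1 := by
          apply mul_le_mul_of_nonneg_left _ (by positivity)
          rw [div_le_one h2]; linarith
      _ = t ^ (r - 1) := mul_one _
  · have base : IntegrableOn (fun t : ℝ => t ^ (r-2)) (Ioi 1) :=
      integrableOn_Ioi_rpow_of_lt (by linarith) one_pos
    refine base.mono' (hmeas.mono_set (Ioi_subset_Ioi zero_le_one)) ?_
    filter_upwards [ae_restrict_mem measurableSet_Ioi] with t ht
    have h1 : (1:ℝ) < t := ht
    have h0 : (0:ℝ) < t := by linarith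
    have h2 : (0:ℝ) < 1 + t := by linarith
    simp only [wfun]
    rw [Real.norm_eq_abs, abs_of_nonneg (by positivity)]
    have key : t ^ (r-2) = t ^ (r-1) * (1/t) := by
      rw [one_div, ← Real.rpow_neg_one t, ← Real.rpow_add h0]
      congr 1; ring
    rw [key]
    apply mul_le_mul_of_nonneg_left _ (by positivity)
    exact one_div_le_one_div_of_le h0 (by linarith)

lemma wfun_integral_pos {r : ℝ} (hr0 : 0 < r) (hr1 : r < 1) :
    0 < ∫ t in Ioi (0:ℝ), wfun r t := by
  have hae : 0 ≤ᵐ[volume.restrict (Ioi (0:ℝ))] wfun r := by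
    filter_upwards [ae_restrict_mem measurableSet_Ioi] with t ht
    have h0 : (0:ℝ) < t := ht
    simp only [wfun, Pi.zero_apply]
    positivity
  rw [setIntegral_pos_iff_support_of_nonneg_ae hae (integrableOn_wfun hr0 hr1)]
  have hsub : Ioi (0:ℝ) ⊆ Function.support (wfun r) ∩ Ioi 0 := by
    intro t ht
    have h0 : (0:ℝ) < t := ht
    refine ⟨?_, ht⟩
    simp only [Function.mem_support, wfun]
    positivity
  calc (0:ℝ≥0∞) < volume (Ioi (0:ℝ)) := by simp [Real.volume_Ioi]
    _ ≤ volume (Function.support (wfun r) ∩ Ioi 0) := measure_mono hsub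

lemma scalar_repr {r : ℝ} (hr0 : 0 < r) (hr1 : r < 1) {x : ℝ} (hx : 0 ≤ x) :
    ∫ lam in Ioi (0:ℝ), lam ^ (r-1) * (x / (x + lam))
      = (∫ t in Ioi (0:ℝ), wfun r t) * x ^ r := by
  rcases eq_or_lt_of_le hx with hx0 | hx0
  · rw [← hx0]
    simp [Real.zero_rpow hr0.ne']
  · have hsub := integral_comp_mul_left_Ioi
      (fun lam : ℝ => lam ^ (r-1) * (x / (x + lam))) 0 hx0
    rw [mul_zero] at hsub
    have hcongr : ∀ t ∈ Ioi (0:ℝ),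
        (x * t) ^ (r-1) * (x / (x + x * t)) = x ^ (r-1) * wfun r t := by
      intro t ht
      have ht0 : (0:ℝ) < t := ht
      have h2 : x + x * t = x * (1 + t) := by ring
      have h3 : x / (x * (1 + t)) = 1 / (1 + t) := by
        rw [div_eq_div_iff (by positivity) (by positivity)]
        ring
      rw [Real.mul_rpow hx ht0.le, h2, h3, wfun]
      ring
    rw [setIntegral_congr_fun measurableSet_Ioi hcongr] at hsub
    rw [integral_const_mul] at hsub
    have hxr : x * (x ^ (r-1) * ∫ t in Ioi (0:ℝ), wfun r t)
        = (∫ t in Ioi (0:ℝ), wfun r t) * x ^ r := by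
      have hx1 : x * x ^ (r-1) = x ^ r := by
        nth_rewrite 1 [← Real.rpow_one x]
        rw [← Real.rpow_add hx0]; congr 1; ring
      rw [← mul_assoc, hx1]; ring
    have hJ : (∫ lam in Ioi (0:ℝ), lam ^ (r-1) * (x / (x + lam)))
        = x * (x ^ (r-1) * ∫ t in Ioi (0:ℝ), wfun r t) := by
      rw [hsub, smul_eq_mul, ← mul_assoc, mul_inv_cancel₀ hx0.ne', one_mul]
    rw [hJ, hxr]

section Repr

variable {K : Type*} [NormedAddCommGroup K] [InnerProductSpace ℂ K] [CompleteSpace K]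

/-- the real-linear functional `S ↦ re ⟪S ζ, ζ⟫`. -/
noncomputable def formCLM (ζ : K) : (K →L[ℂ] K) →L[ℝ] ℝ :=
  RCLike.reCLM.comp (((innerSL ℂ ζ).restrictScalars ℝ).comp
    (((ContinuousLinearMap.apply ℂ K) ζ).restrictScalars ℝ))

lemma formCLM_apply (ζ : K) (S : K →L[ℂ] K) :
    formCLM ζ S = reC ⟪S ζ, ζ⟫_ℂ := by
  simp only [formCLM, ContinuousLinearMap.coe_comp', Function.comp_apply,
    ContinuousLinearMap.coe_restrictScalars', ContinuousLinearMap.apply_apply,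
    innerSL_apply_apply, RCLike.reCLM_apply]
  exact (inner_re_symm _ _)

lemma repr_lemma (A : K →L[ℂ] K) (hA : A.IsPositive) {r : ℝ} (hr0 : 0 < r) (hr1 : r < 1)
    (ζ : K) :
    ((∫ t in Ioi (0:ℝ), wfun r t) * reC ⟪cfc (fun x : ℝ => x ^ r) A ζ, ζ⟫_ℂ
      = ∫ lam : (Ioi (0:ℝ)),
          reC ⟪cfc (fun x : ℝ => (lam:ℝ) ^ (r-1) * (x / (x + (lam:ℝ)))) A ζ, ζ⟫_ℂ
          ∂(Measure.comap Subtype.val volume)) ∧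
      Integrable (fun lam : (Ioi (0:ℝ)) =>
          reC ⟪cfc (fun x : ℝ => (lam:ℝ) ^ (r-1) * (x / (x + (lam:ℝ)))) A ζ, ζ⟫_ℂ)
        (Measure.comap Subtype.val volume) := by
  have hsa : IsSelfAdjoint A := hA.isSelfAdjoint
  have hσ : spectrum ℝ A ⊆ Set.Ici 0 := by
    have h0 : 0 ≤ A := A.nonneg_iff_isPositive.mpr hA
    exact fun x hx => spectrum_nonneg_of_nonneg h0 hx
  haveI : CompactSpace (spectrum ℝ A) :=
    isCompact_iff_compactSpace.mp (spectrum.isCompact A)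
  set M : ℝ := ‖A‖ * ‖(1 : K →L[ℂ] K)‖ with hM
  have hM0 : 0 ≤ M := by positivity
  have hxM : ∀ x ∈ spectrum ℝ A, x ≤ M := fun x hx =>
    (le_abs_self x).trans (spectrum.norm_le_norm_mul_of_mem hx)
  have hU : Continuous (fun p : (Ioi (0:ℝ)) × (spectrum ℝ A) =>
      ((p.1 : ℝ)) ^ (r-1) * ((p.2 : ℝ) / ((p.2 : ℝ) + (p.1 : ℝ)))) := by
    apply Continuous.mul
    · apply Continuous.rpow_const (continuous_subtype_val.comp continuous_fst)
      intro p
      exact Or.inl (ne_of_gt p.1.2)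
    · apply Continuous.div
      · exact continuous_subtype_val.comp continuous_snd
      · exact (continuous_subtype_val.comp continuous_snd).add
          (continuous_subtype_val.comp continuous_fst)
      · intro p
        have h1 : (0:ℝ) < (p.1 : ℝ) := p.1.2
        have h2 : (0:ℝ) ≤ (p.2 : ℝ) := hσ p.2.2
        positivity
  set Fc : C((Ioi (0:ℝ)), C(spectrum ℝ A, ℝ)) := ContinuousMap.curry ⟨_, hU⟩ with hFc
  set μX : Measure (Ioi (0:ℝ)) := Measure.comap Subtype.val volume with hμX
  have hmap : Measure.map Subtype.val μX = volume.restrict (Ioi (0:ℝ)) := by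
    rw [hμX, map_comap_subtype_coe measurableSet_Ioi]
  have hbound_int : IntegrableOn (fun lam : ℝ => (M+1) * wfun r lam) (Ioi 0) :=
    (integrableOn_wfun hr0 hr1).const_mul _
  have hbound_intX : Integrable (fun lam : (Ioi (0:ℝ)) => (M+1) * wfun r (lam : ℝ)) μX := by
    have h2 : Integrable (fun lam : ℝ => (M+1) * wfun r lam) (Measure.map Subtype.val μX) := by
      rw [hmap]; exact hbound_int
    exact ((MeasurableEmbedding.subtype_coe measurableSet_Ioi).integrable_map_iff).mp h2
  have hfc_int : Integrable (fun lam : (Ioi (0:ℝ)) => Fc lam) μX := by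
    refine hbound_intX.mono' (Fc.continuous.aestronglyMeasurable) ?_
    filter_upwards with lam
    have hlam : (0:ℝ) < (lam : ℝ) := lam.2
    have hb0 : (0:ℝ) ≤ (M+1) * wfun r (lam:ℝ) := by
      simp only [wfun]; positivity
    rw [ContinuousMap.norm_le _ hb0]
    intro x
    have hx0 : (0:ℝ) ≤ (x : ℝ) := hσ x.2
    have hxM' : (x : ℝ) ≤ M := hxM _ x.2
    have hfc_eval : (Fc lam) x = ((lam : ℝ)) ^ (r-1) * ((x : ℝ) / ((x : ℝ) + (lam : ℝ))) := rfl
    rw [hfc_eval, Real.norm_eq_abs, abs_of_nonneg (by positivity)]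
    simp only [wfun]
    have key : (x : ℝ) / ((x : ℝ) + (lam : ℝ)) ≤ (M+1) * (1 / (1 + (lam : ℝ))) := by
      rw [mul_one_div, div_le_div_iff₀ (by positivity) (by positivity)]
      nlinarith
    calc ((lam : ℝ)) ^ (r-1) * ((x : ℝ) / ((x : ℝ) + (lam : ℝ)))
        ≤ ((lam : ℝ)) ^ (r-1) * ((M+1) * (1 / (1 + (lam : ℝ)))) :=
          mul_le_mul_of_nonneg_left key (by positivity)
      _ = (M+1) * (((lam : ℝ)) ^ (r-1) * (1 / (1 + (lam : ℝ)))) := by ring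
  have hcont_rpow : ContinuousOn (fun x : ℝ => (∫ t in Ioi (0:ℝ), wfun r t) * x ^ r)
      (spectrum ℝ A) := by
    apply ContinuousOn.mul continuousOn_const
    intro x hx
    exact (Real.continuousAt_rpow_const x r (Or.inr hr0.le)).continuousWithinAt
  have h_int_val : (∫ lam : (Ioi (0:ℝ)), Fc lam ∂μX)
      = ⟨_, hcont_rpow.restrict⟩ := by
    ext x
    rw [ContinuousMap.integral_apply hfc_int x]
    have hx0 : (0:ℝ) ≤ (x : ℝ) := hσ x.2
    have htr : (∫ lam : (Ioi (0:ℝ)), (Fc lam) x ∂μX)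
        = ∫ lam in Ioi (0:ℝ), lam ^ (r-1) * ((x:ℝ) / ((x:ℝ) + lam)) := by
      rw [hμX]
      exact integral_subtype_comap measurableSet_Ioi
        (fun lam : ℝ => lam ^ (r-1) * ((x:ℝ) / ((x:ℝ) + lam)))
    rw [htr, scalar_repr hr0 hr1 hx0]
    rfl
  -- the continuous linear maps
  set ψ : C(spectrum ℝ A, ℝ) →L[ℝ] ℝ := (formCLM ζ).comp (cfcL (a := A) hsa) with hψ
  have hflam_cont : ∀ lam : (Ioi (0:ℝ)),
      ContinuousOn (fun x : ℝ => (lam:ℝ) ^ (r-1) * (x / (x + (lam:ℝ)))) (spectrum ℝ A) := by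
    intro lam
    have hlam : (0:ℝ) < (lam:ℝ) := lam.2
    apply continuousOn_const.mul
    apply ContinuousOn.div continuousOn_id (continuousOn_id.add continuousOn_const)
    intro x hx
    have : (0:ℝ) ≤ x := hσ hx
    show x + (lam:ℝ) ≠ 0
    positivity
  have hψlam : ∀ lam : (Ioi (0:ℝ)), ψ (Fc lam)
      = reC ⟪cfc (fun x : ℝ => (lam:ℝ) ^ (r-1) * (x / (x + (lam:ℝ)))) A ζ, ζ⟫_ℂ := by
    intro lam
    have hrepr : cfc (fun x : ℝ => (lam:ℝ) ^ (r-1) * (x / (x + (lam:ℝ)))) A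
        = cfcL (a := A) hsa ⟨_, (hflam_cont lam).restrict⟩ := cfc_eq_cfcL hsa (hflam_cont lam)
    have hfc_eq : Fc lam = (⟨_, (hflam_cont lam).restrict⟩ : C(spectrum ℝ A, ℝ)) :=
      ContinuousMap.ext fun x => rfl
    rw [hψ, ContinuousLinearMap.comp_apply, hfc_eq, ← hrepr, formCLM_apply]
  have h_comm : (∫ lam : (Ioi (0:ℝ)), ψ (Fc lam) ∂μX)
      = ψ (∫ lam : (Ioi (0:ℝ)), Fc lam ∂μX) :=
    ContinuousLinearMap.integral_comp_comm ψ hfc_int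
  have hval : ψ (∫ lam : (Ioi (0:ℝ)), Fc lam ∂μX)
      = (∫ t in Ioi (0:ℝ), wfun r t) * reC ⟪cfc (fun x : ℝ => x ^ r) A ζ, ζ⟫_ℂ := by
    rw [h_int_val]
    have hrepr : cfc (fun x : ℝ => (∫ t in Ioi (0:ℝ), wfun r t) * x ^ r) A
        = cfcL (a := A) hsa ⟨_, hcont_rpow.restrict⟩ := cfc_eq_cfcL hsa hcont_rpow
    have hcontr : ContinuousOn (fun x : ℝ => x ^ r) (spectrum ℝ A) := fun x hx =>
      (Real.continuousAt_rpow_const x r (Or.inr hr0.le)).continuousWithinAt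
    have hsmul : cfc (fun x : ℝ => (∫ t in Ioi (0:ℝ), wfun r t) * x ^ r) A
        = (∫ t in Ioi (0:ℝ), wfun r t) • cfc (fun x : ℝ => x ^ r) A := by
      rw [← cfc_smul (∫ t in Ioi (0:ℝ), wfun r t) (fun x : ℝ => x ^ r) A hcontr]
      rfl
    rw [hψ, ContinuousLinearMap.comp_apply, ← hrepr, hsmul, ContinuousLinearMap.map_smul, formCLM_apply,
      smul_eq_mul]
  constructor
  · rw [← funext hψlam] at *
    rw [← h_comm] at hval
    exact hval.symm
  · have := ψ.integrable_comp hfc_int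
    exact this.congr (Filter.Eventually.of_forall hψlam)

lemma cfc_scale (A : K →L[ℂ] K) (hA : A.IsPositive) (c lam : ℝ) (hlam : 0 < lam) (ζ : K) :
    reC ⟪cfc (fun x : ℝ => c * (x / (x + lam))) A ζ, ζ⟫_ℂ
      = c * reC ⟪cfc (fun x : ℝ => x / (x + lam)) A ζ, ζ⟫_ℂ := by
  have hσ : spectrum ℝ A ⊆ Set.Ici 0 := by
    have h0 : 0 ≤ A := A.nonneg_iff_isPositive.mpr hA
    exact fun x hx => spectrum_nonneg_of_nonneg h0 hx
  have hcontg : ContinuousOn (fun x : ℝ => x / (x + lam)) (spectrum ℝ A) := by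
    apply ContinuousOn.div continuousOn_id (continuousOn_id.add continuousOn_const)
    intro x hx
    have : (0:ℝ) ≤ x := hσ hx
    show x + lam ≠ 0
    positivity
  have : cfc (fun x : ℝ => c * (x / (x + lam))) A
      = c • cfc (fun x : ℝ => x / (x + lam)) A := by
    rw [← cfc_smul c _ A hcontg]
    rfl
  rw [this, ContinuousLinearMap.smul_apply, re_inner_real_smul]

end Repr

end LoewnerHeinzAux

open LoewnerHeinzAux

/-- Löwner–Heinz with a contraction.  If `Δ₁, Δ₂` are positive operators
and `T` is a contraction with `T* Δ₂ T ≤ Δ₁` in the quadratic-form sense, then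
`T* Δ₂^r T ≤ Δ₁^r` for all `0 ≤ r ≤ 1`. -/
theorem stmt1
    {H₁ H₂ : Type*} [NormedAddCommGroup H₁] [InnerProductSpace ℂ H₁] [CompleteSpace H₁]
    [NormedAddCommGroup H₂] [InnerProductSpace ℂ H₂] [CompleteSpace H₂]
    (Δ₁ : H₁ →L[ℂ] H₁) (Δ₂ : H₂ →L[ℂ] H₂)
    (hΔ₁ : Δ₁.IsPositive) (hΔ₂ : Δ₂.IsPositive)
    (T : H₁ →L[ℂ] H₂) (hT : ‖T‖ ≤ 1)
    (h : ∀ ξ : H₁, RCLike.re ⟪Δ₂ (T ξ), T ξ⟫_ℂ ≤ RCLike.re ⟪Δ₁ ξ, ξ⟫_ℂ)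
    (r : ℝ) (hr0 : 0 ≤ r) (hr1 : r ≤ 1) :
    ∀ ξ : H₁,
      RCLike.re ⟪cfc (fun x : ℝ => x ^ r) Δ₂ (T ξ), T ξ⟫_ℂ ≤
      RCLike.re ⟪cfc (fun x : ℝ => x ^ r) Δ₁ ξ, ξ⟫_ℂ := by
  intro ξ
  rcases eq_or_lt_of_le hr0 with hr0' | hr0'
  · -- r = 0
    have hfun : (fun x : ℝ => x ^ r) = fun _ : ℝ => (1:ℝ) := by
      funext x; rw [← hr0', Real.rpow_zero]
    have h2 : cfc (fun x : ℝ => x ^ r) Δ₂ = 1 := by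
      rw [hfun]; exact cfc_const_one ℝ Δ₂ hΔ₂.isSelfAdjoint
    have h1 : cfc (fun x : ℝ => x ^ r) Δ₁ = 1 := by
      rw [hfun]; exact cfc_const_one ℝ Δ₁ hΔ₁.isSelfAdjoint
    rw [h1, h2, ContinuousLinearMap.one_apply, ContinuousLinearMap.one_apply,
      inner_self_eq_norm_sq, inner_self_eq_norm_sq]
    have : ‖T ξ‖ ≤ ‖ξ‖ := by
      calc ‖T ξ‖ ≤ ‖T‖ * ‖ξ‖ := T.le_opNorm _
        _ ≤ 1 * ‖ξ‖ := mul_le_mul_of_nonneg_right hT (norm_nonneg _)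
        _ = ‖ξ‖ := one_mul _
    exact pow_le_pow_left₀ (norm_nonneg _) this 2
  rcases eq_or_lt_of_le hr1 with hr1' | hr1'
  · -- r = 1
    have hfun : (fun x : ℝ => x ^ r) = fun x : ℝ => x := by
      funext x; rw [hr1', Real.rpow_one]
    have h2 : cfc (fun x : ℝ => x ^ r) Δ₂ = Δ₂ := by
      rw [hfun]; exact cfc_id' ℝ Δ₂ hΔ₂.isSelfAdjoint
    have h1 : cfc (fun x : ℝ => x ^ r) Δ₁ = Δ₁ := by
      rw [hfun]; exact cfc_id' ℝ Δ₁ hΔ₁.isSelfAdjoint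
    rw [h1, h2]
    exact h ξ
  · -- 0 < r < 1
    obtain ⟨e2, i2⟩ := repr_lemma Δ₂ hΔ₂ hr0' hr1' (T ξ)
    obtain ⟨e1, i1⟩ := repr_lemma Δ₁ hΔ₁ hr0' hr1' ξ
    have hpt : ∀ lam : (Set.Ioi (0:ℝ)),
        RCLike.re ⟪cfc (fun x : ℝ => (lam:ℝ) ^ (r-1) * (x / (x + (lam:ℝ)))) Δ₂ (T ξ), T ξ⟫_ℂ
          ≤ RCLike.re ⟪cfc (fun x : ℝ => (lam:ℝ) ^ (r-1) * (x / (x + (lam:ℝ)))) Δ₁ ξ, ξ⟫_ℂ := by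
      intro lam
      have hlam : (0:ℝ) < (lam:ℝ) := lam.2
      have hbase := base_ineq Δ₁ Δ₂ hΔ₁ hΔ₂ T hT h (lam:ℝ) hlam ξ
      rw [cfc_scale Δ₂ hΔ₂ _ _ hlam, cfc_scale Δ₁ hΔ₁ _ _ hlam]
      exact mul_le_mul_of_nonneg_left hbase (Real.rpow_nonneg hlam.le _)
    have hmono := MeasureTheory.integral_mono i2 i1 hpt
    rw [← e2, ← e1] at hmono
    exact le_of_mul_le_mul_left hmono (wfun_integral_pos hr0' hr1')
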